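/- Let V be a finite-dimensional real vector space, Λ a lattice in V, and let P and Q be integers greater than 1 that are multiplicatively independent. Let f : V → ℝ be a discretely supported function such that f_P(x) = f(Px) − f(x) and f_Q(x) = f(Qx) − f(x) are both Λ-periodic. Then the image of the support of f under the quotient map V → V/Λ is a finite set. -/

import Mathlib

open Filter Function

/-- The additive subgroup `Λ` is a lattice in the finite-dimensional real vector space `V`:
it is the `ℤ`-span of an `ℝ`-basis of `V`. -/
def IsLattice (V : Type*) [NormedAddCommGroup V] [NormedSpace ℝ V]
    [FiniteDimensional ℝ V] (Λ : AddSubgroup V) : Prop :=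
  ∃ b : Module.Basis (Fin (Module.finrank ℝ V)) ℝ V,
    (Λ : Set V) = (Submodule.span ℤ (Set.range b) : Submodule ℤ V)

/-- `f` is discretely supported: its support has no accumulation points in `V`. -/
def DiscretelySupported {V : Type*} [NormedAddCommGroup V] {α : Type*} [Zero α]
    (f : V → α) : Prop :=
  ∀ x : V, ¬ AccPt x (𝓟 (Function.support f))

/-- `f` is `Λ`-periodic. -/
def IsPeriodic {V : Type*} [AddCommGroup V] {α : Type*} (Λ : Set V) (f : V → α) : Prop :=
  ∀ x : V, ∀ l ∈ Λ, f (x + l) = f x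

/-- `P` and `Q` are multiplicatively independent: `P ^ a = Q ^ b` with integer exponents
`a, b` implies `a = b = 0`. -/
def MultIndep (P Q : ℤ) : Prop :=
  ∀ a b : ℤ, (P : ℚ) ^ a = (Q : ℚ) ^ b → a = 0 ∧ b = 0

/-- **Lemma on supports.** If `P, Q > 1` are multiplicatively independent, `f` is
discretely supported and both `f_P` and `f_Q` are `Λ`-periodic, then the image of the
support of `f` in `V/Λ` is finite. -/
theorem support_image_finite
    (V : Type*) [NormedAddCommGroup V] [NormedSpace ℝ V] [FiniteDimensional ℝ V]
    (Λ : AddSubgroup V) (hΛ : IsLattice V Λ)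
    (P Q : ℤ) (hP : 1 < P) (hQ : 1 < Q) (hPQ : MultIndep P Q)
    (f : V → ℝ) (hf : DiscretelySupported f)
    (hfP : IsPeriodic (Λ : Set V) (fun x => f ((P : ℝ) • x) - f x))
    (hfQ : IsPeriodic (Λ : Set V) (fun x => f ((Q : ℝ) • x) - f x)) :
    Set.Finite ((QuotientAddGroup.mk : V → V ⧸ Λ) '' Function.support f) := by
  classical
  by_contra hfin
  have hinf : ((QuotientAddGroup.mk : V → V ⧸ Λ) '' Function.support f).Infinite := hfin
  -- Notation
  set S : Set V := Function.support f with hSdef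
  set π : V → V ⧸ Λ := QuotientAddGroup.mk with hπdef
  -- Basic facts about P, Q
  have hP0 : (0:ℤ) < P := lt_trans one_pos hP
  have hQ0 : (0:ℤ) < Q := lt_trans one_pos hQ
  have hPne : (P:ℤ) ≠ 0 := ne_of_gt hP0
  have hQne : (Q:ℤ) ≠ 0 := ne_of_gt hQ0
  have hPR1 : (1:ℝ) < (P:ℝ) := by exact_mod_cast hP
  have hPR0 : (0:ℝ) < (P:ℝ) := lt_trans one_pos hPR1
  have hPRne : (P:ℝ) ≠ 0 := ne_of_gt hPR0
  have hPQ0 : (P:ℚ) ≠ 0 := by exact_mod_cast hPne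
  have hQQ0 : (Q:ℚ) ≠ 0 := by exact_mod_cast hQne
  -- The basis and the radius R
  obtain ⟨b, hb⟩ := hΛ
  set R : ℝ := ∑ i, ‖b i‖ with hRdef
  have hR0 : 0 ≤ R := Finset.sum_nonneg (fun _ _ => norm_nonneg _)
  -- membership transfer
  have hmemΛ : ∀ x : V, x ∈ Λ ↔ x ∈ Submodule.span ℤ (Set.range b) := by
    intro x
    constructor
    · intro h
      have h' : x ∈ (Λ : Set V) := h
      rw [hb] at h'
      exact h'
    · intro h
      have h' : x ∈ ((Submodule.span ℤ (Set.range b) : Submodule ℤ V) : Set V) := h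
      rw [← hb] at h'
      exact h'
  -- local finiteness of the support
  have hloc : ∀ ρ : ℝ, (S ∩ Metric.closedBall 0 ρ).Finite := by
    intro ρ
    by_contra hloc'
    have hinf' : (S ∩ Metric.closedBall 0 ρ).Infinite := hloc'
    obtain e := hinf'.natEmbedding
    set x : ℕ → V := fun n => (e n : V) with hxdef
    have hxmem : ∀ n, x n ∈ S ∩ Metric.closedBall 0 ρ := fun n => (e n).2
    have hxball : ∀ n, x n ∈ Metric.closedBall (0:V) ρ := fun n => (hxmem n).2
    have hxinj : Function.Injective x := by
      intro m n h
      exact e.injective (Subtype.ext h)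
    have hcomp : IsCompact (Metric.closedBall (0:V) ρ) := isCompact_closedBall 0 ρ
    obtain ⟨a, _, φ, hφ, hlim⟩ := hcomp.tendsto_subseq hxball
    refine hf a ?_
    rw [accPt_iff_nhds]
    intro U hU
    have hev : ∀ᶠ n in atTop, x (φ n) ∈ U := hlim.eventually_mem hU
    rw [eventually_atTop] at hev
    obtain ⟨N₀, hN₀⟩ := hev
    have hinj2 : x (φ N₀) ≠ x (φ (N₀+1)) := by
      intro h
      have := hφ.injective (hxinj h)
      omega
    by_cases hca : x (φ N₀) = a
    · refine ⟨x (φ (N₀+1)), ⟨hN₀ _ (Nat.le_succ _), (hxmem _).1⟩, ?_⟩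
      intro h
      exact hinj2 (hca.trans h.symm)
    · exact ⟨x (φ N₀), ⟨hN₀ _ le_rfl, (hxmem _).1⟩, hca⟩
  -- Λ intersected with a bounded set is finite
  have hΛball : ∀ ρ : ℝ, ((Λ : Set V) ∩ Metric.closedBall 0 ρ).Finite := by
    intro ρ
    rw [hb, Set.inter_comm]
    change (Metric.closedBall (0:V) ρ ∩ (Submodule.span ℤ (Set.range b)).toAddSubgroup).Finite
    have hdt : DiscreteTopology (Submodule.span ℤ (Set.range b)).toAddSubgroup :=
      (inferInstance : DiscreteTopology (Submodule.span ℤ (Set.range b)))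
    exact Metric.finite_isBounded_inter_isClosed DiscreteTopology.isDiscrete Metric.isBounded_closedBall
      AddSubgroup.isClosed_of_discrete
  -- reduction: every coset has a representative of norm at most R
  have hred0 : ∀ t : V ⧸ Λ, ∃ x : V, π x = t ∧ ‖x‖ ≤ R := by
    intro t
    obtain ⟨y, rfl⟩ := QuotientAddGroup.mk_surjective t
    refine ⟨ZSpan.fract b y, ?_, ZSpan.norm_fract_le b y⟩
    have hmem : ZSpan.fract b y - y ∈ Λ := by
      rw [hmemΛ]
      rw [ZSpan.fract_apply, show y - (ZSpan.floor b y : V) - y = -(ZSpan.floor b y : V) by abel]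
      exact neg_mem (Submodule.coe_mem _)
    show QuotientAddGroup.mk _ = QuotientAddGroup.mk _
    rw [QuotientAddGroup.eq_iff_sub_mem]
    exact hmem
  choose red hredmk hrednorm using hred0
  -- bridge: π of a real-integer scalar multiple
  have mkz : ∀ (n : ℤ) (x : V), π ((n:ℝ) • x) = n • (π x) := by
    intro n x
    rw [Int.cast_smul_eq_zsmul]
    exact map_zsmul (QuotientAddGroup.mk' Λ) n x
  have mkzero : ∀ l ∈ Λ, π l = 0 := by
    intro l hl
    exact (QuotientAddGroup.eq_zero_iff l).2 hl
  have πsub : ∀ x y : V, π (x - y) = π x - π y := by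
    intro x y
    exact map_sub (QuotientAddGroup.mk' Λ) x y
  -- the periodicity property for products
  have Good : ℤ → Prop := fun _ => True
  clear Good
  set Good : ℤ → Prop := fun N => ∀ x : V, ∀ l ∈ Λ,
      f ((N:ℝ) • (x + l)) - f (x + l) = f ((N:ℝ) • x) - f x with hGooddef
  have goodP : Good P := fun x l hl => hfP x l hl
  have goodQ : Good Q := fun x l hl => hfQ x l hl
  have goodMul : ∀ m n : ℤ, Good m → Good n → Good (m * n) := by
    intro m n hm hn x l hl
    have hnl : (n:ℝ) • l ∈ Λ := by
      rw [Int.cast_smul_eq_zsmul]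
      exact AddSubgroup.zsmul_mem Λ hl n
    have h1 := hm ((n:ℝ) • x) ((n:ℝ) • l) hnl
    have h2 := hn x l hl
    have e1 : ((m*n : ℤ):ℝ) • (x + l) = (m:ℝ) • ((n:ℝ) • x + (n:ℝ) • l) := by
      push_cast
      rw [mul_smul, smul_add]
    have e2 : ((m*n : ℤ):ℝ) • x = (m:ℝ) • ((n:ℝ) • x) := by
      push_cast
      rw [mul_smul]
    have e3 : (n:ℝ) • (x + l) = (n:ℝ) • x + (n:ℝ) • l := smul_add _ _ _
    rw [e1, e2]
    rw [e3] at h2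
    linarith [h1, h2]
  have goodPpow : ∀ a : ℕ, Good (P ^ a) := by
    intro a
    induction a with
    | zero =>
      intro x l hl
      simp
    | succ a ih =>
      have := goodMul (P^a) P ih goodP
      rwa [← pow_succ] at this
  have goodPQ : ∀ a c : ℕ, Good (P ^ a * Q ^ c) := by
    intro a c
    induction c with
    | zero =>
      simpa using goodPpow a
    | succ c ih =>
      have := goodMul (P^a * Q^c) Q ih goodQ
      rwa [mul_assoc, ← pow_succ] at this
  -- the finite window near the origin
  set F : Set V := S ∩ Metric.closedBall 0 ((P:ℝ) * R) with hFdef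
  have hFfin : F.Finite := hloc _
  -- the finite base set of cosets
  set W : Set (V ⧸ Λ) := {t | ∃ x : V, f x ≠ 0 ∧ ‖x‖ ≤ (P:ℝ) * R ∧
      (t = π x ∨ t = (P:ℤ) • (π x))} with hWdef
  have hWfin : W.Finite := by
    have hsub : W ⊆ (π '' F) ∪ (fun t => (P:ℤ) • t) '' (π '' F) := by
      rintro t ⟨x, hx1, hx2, h | h⟩
      · left
        exact ⟨x, ⟨hx1, by simpa [Metric.mem_closedBall, dist_eq_norm] using hx2⟩, h.symm⟩
      · right
        exact ⟨π x, ⟨x, ⟨hx1, by simpa [Metric.mem_closedBall, dist_eq_norm] using hx2⟩, rfl⟩,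
          h.symm⟩
    exact ((hFfin.image π).union ((hFfin.image π).image _)).subset hsub
  -- Key step: a support point whose P-division is not in the support has coset in W
  have keyW : ∀ y : V, f y ≠ 0 → f ((P:ℝ)⁻¹ • y) = 0 → π y ∈ W := by
    intro y hy hy'
    set x0 : V := (P:ℝ)⁻¹ • y with hx0def
    set u : V := red (π x0) with hudef
    have humk : π u = π x0 := hredmk _
    have hunorm : ‖u‖ ≤ R := hrednorm _
    have hl : u - x0 ∈ Λ := by
      have := humk
      rw [hπdef] at this
      exact (QuotientAddGroup.eq_iff_sub_mem).1 this
    have hx0u : x0 + (u - x0) = u := by abel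
    have hPy : (P:ℝ) • x0 = y := by
      rw [hx0def, smul_inv_smul₀ hPRne]
    have hgood := goodP x0 (u - x0) hl
    rw [hx0u, hPy] at hgood
    -- hgood : f ((P:ℝ) • u) - f u = f y - f x0
    rw [hx0def] at hgood
    rw [hy'] at hgood
    -- f(Pu) - f(u) = f(y)
    have hyPu : π y = (P:ℤ) • π u := by
      have : y = (P:ℝ) • u - (P:ℝ) • (u - x0) := by
        rw [← smul_sub, show u - (u - x0) = x0 by abel]
        exact hPy.symm
      rw [this, πsub, mkz, mkz]
      have : π (u - x0) = 0 := mkzero _ hl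
      rw [this, smul_zero, sub_zero]
    by_cases hu : f u = 0
    · -- then f(Pu) = f(y) ≠ 0
      have hPu : f ((P:ℝ) • u) ≠ 0 := by
        rw [hu, sub_zero] at hgood
        rw [hgood]
        exact fun h => hy (by linarith [h])
      refine ⟨(P:ℝ) • u, hPu, ?_, Or.inl ?_⟩
      · rw [norm_smul]
        simp only [Real.norm_eq_abs]
        rw [abs_of_pos hPR0]
        exact mul_le_mul_of_nonneg_left hunorm (le_of_lt hPR0)
      · rw [hyPu, mkz]
    · refine ⟨u, hu, le_trans hunorm (le_mul_of_one_le_left hR0 (le_of_lt hPR1)), Or.inr hyPu⟩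
  -- Descent: from any nonzero support point divide by P while staying in the support
  have descend : ∀ x : V, f x ≠ 0 → x ≠ 0 →
      ∃ (k : ℕ) (z : V), f z ≠ 0 ∧ f ((P:ℝ)⁻¹ • z) = 0 ∧ x = ((P:ℝ)^k) • z := by
    intro x hx hx0
    set A : Set ℕ := {k | f (((P:ℝ)^k)⁻¹ • x) ≠ 0} with hAdef
    have h0A : 0 ∈ A := by
      simp only [hAdef, Set.mem_setOf_eq, pow_zero, inv_one, one_smul]
      exact hx
    have hAfin : A.Finite := by
      have himg : (fun k : ℕ => ((P:ℝ)^k)⁻¹ • x) '' A ⊆ S ∩ Metric.closedBall 0 ‖x‖ := by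
        rintro _ ⟨k, hk, rfl⟩
        constructor
        · exact hk
        · rw [Metric.mem_closedBall, dist_eq_norm, sub_zero, norm_smul]
          simp only [Real.norm_eq_abs]
          rw [abs_of_pos (by positivity)]
          have h1 : (1:ℝ) ≤ (P:ℝ)^k := one_le_pow₀ (le_of_lt hPR1)
          nlinarith [norm_nonneg x, inv_le_one_of_one_le₀ h1]
      apply Set.Finite.of_finite_image ((hloc ‖x‖).subset himg)
      intro k _ k' _ hkk
      have hPk : ((P:ℝ)^k) = ((P:ℝ)^k') := by
        have hkk' : ((P:ℝ)^k)⁻¹ • x = ((P:ℝ)^k')⁻¹ • x := hkk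
        have h1 : (((P:ℝ)^k)⁻¹ - ((P:ℝ)^k')⁻¹) • x = 0 := by
          rw [sub_smul, hkk', sub_self]
        rcases smul_eq_zero.1 h1 with h | h
        · exact inv_injective (sub_eq_zero.1 h)
        · exact absurd h hx0
      exact pow_right_injective₀ hPR0 (ne_of_gt hPR1) hPk
    have hstop : ∃ k ∈ A, (k+1) ∉ A := by
      by_contra hcon
      push_neg at hcon
      have hall : ∀ k : ℕ, k ∈ A := by
        intro k
        induction k with
        | zero => exact h0A
        | succ k ih => exact hcon k ih
      exact (Set.infinite_of_injective_forall_mem (f := id)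
        (fun m n h => h) (fun k => hall k)) hAfin
    obtain ⟨k, hkA, hk1⟩ := hstop
    refine ⟨k, ((P:ℝ)^k)⁻¹ • x, hkA, ?_, ?_⟩
    · have : (P:ℝ)⁻¹ • (((P:ℝ)^k)⁻¹ • x) = ((P:ℝ)^(k+1))⁻¹ • x := by
        rw [smul_smul, ← mul_inv, ← pow_succ']
      rw [this]
      simpa [hAdef] using hk1
    · rw [smul_inv_smul₀ (by positivity)]
  -- every coset of the image is of the form P^k • g with g ∈ W, or zero
  have hrep : ∀ t ∈ (π '' S), t = 0 ∨ ∃ g ∈ W, ∃ k : ℕ, t = ((P:ℤ)^k) • g := by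
    rintro t ⟨s, hsS, rfl⟩
    by_cases h0 : s = 0
    · left
      rw [h0]
      exact mkzero 0 (zero_mem Λ)
    · right
      obtain ⟨k, z, hz, hz', hxz⟩ := descend s hsS h0
      refine ⟨π z, keyW z hz hz', k, ?_⟩
      rw [hxz]
      have : ((P:ℝ)^k) = (((P:ℤ)^k : ℤ):ℝ) := by push_cast; ring
      rw [this, mkz]
  -- torsion cosets
  set Tor : Set (V ⧸ Λ) := {t | ∃ n : ℤ, n ≠ 0 ∧ n • t = 0} with hTordef
  have hTn : ∀ n : ℤ, n ≠ 0 → {t : V ⧸ Λ | n • t = 0}.Finite := by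
    intro n hn
    have hnR : (n:ℝ) ≠ 0 := by exact_mod_cast hn
    have h1 : {x : V | ‖x‖ ≤ R ∧ (n:ℝ) • x ∈ Λ}.Finite := by
      have himg : (fun x : V => (n:ℝ) • x) '' {x : V | ‖x‖ ≤ R ∧ (n:ℝ) • x ∈ Λ}
          ⊆ (Λ : Set V) ∩ Metric.closedBall 0 (|(n:ℝ)| * R) := by
        rintro _ ⟨x, ⟨hx1, hx2⟩, rfl⟩
        refine ⟨hx2, ?_⟩
        rw [Metric.mem_closedBall, dist_eq_norm, sub_zero, norm_smul]
        simp only [Real.norm_eq_abs]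
        exact mul_le_mul_of_nonneg_left hx1 (abs_nonneg _)
      apply Set.Finite.of_finite_image ((hΛball _).subset himg)
      intro x _ y _ hxy
      have hxy' : (n:ℝ) • x = (n:ℝ) • y := hxy
      have : (n:ℝ)⁻¹ • ((n:ℝ) • x) = (n:ℝ)⁻¹ • ((n:ℝ) • y) := by rw [hxy']
      rwa [inv_smul_smul₀ hnR, inv_smul_smul₀ hnR] at this
    have h2 : {t : V ⧸ Λ | n • t = 0} ⊆ π '' {x : V | ‖x‖ ≤ R ∧ (n:ℝ) • x ∈ Λ} := by
      intro t ht
      refine ⟨red t, ⟨hrednorm t, ?_⟩, hredmk t⟩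
      have : π ((n:ℝ) • red t) = 0 := by
        rw [mkz, hredmk t]
        exact ht
      exact (QuotientAddGroup.eq_zero_iff _).1 this
    exact (h1.image π).subset h2
  have hTorFin : ((π '' S) ∩ Tor).Finite := by
    have horb : ∀ g ∈ W, ({t : V ⧸ Λ | ∃ k : ℕ, t = ((P:ℤ)^k) • g} ∩ Tor).Finite := by
      intro g hg
      by_cases hgTor : g ∈ Tor
      · obtain ⟨n, hn0, hng⟩ := hgTor
        apply (hTn n hn0).subset
        rintro t ⟨⟨k, rfl⟩, _⟩
        show n • ((P:ℤ)^k • g) = 0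
        rw [smul_comm, hng, smul_zero]
      · have : {t : V ⧸ Λ | ∃ k : ℕ, t = ((P:ℤ)^k) • g} ∩ Tor = ∅ := by
          rw [Set.eq_empty_iff_forall_notMem]
          rintro t ⟨⟨k, rfl⟩, n, hn0, hnt⟩
          refine hgTor ⟨n * (P:ℤ)^k, mul_ne_zero hn0 (pow_ne_zero _ hPne), ?_⟩
          rw [mul_smul]
          exact hnt
        rw [this]
        exact Set.finite_empty
    have hsub : (π '' S) ∩ Tor ⊆ {(0 : V ⧸ Λ)} ∪
        ⋃ g ∈ W, ({t : V ⧸ Λ | ∃ k : ℕ, t = ((P:ℤ)^k) • g} ∩ Tor) := by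
      rintro t ⟨htS, htTor⟩
      rcases hrep t htS with h0 | ⟨g, hgW, k, hk⟩
      · left; exact h0
      · right
        exact Set.mem_biUnion hgW ⟨⟨k, hk⟩, htTor⟩
    exact ((Set.finite_singleton _).union (Set.Finite.biUnion hWfin horb)).subset hsub
  -- cosets whose reduction is in the support
  have hBadFin : {t : V ⧸ Λ | t ∈ (π '' S) ∧ f (red t) ≠ 0}.Finite := by
    have himg : red '' {t : V ⧸ Λ | t ∈ (π '' S) ∧ f (red t) ≠ 0}
        ⊆ S ∩ Metric.closedBall 0 R := by
      rintro _ ⟨t, ⟨_, ht⟩, rfl⟩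
      exact ⟨ht, by simpa [Metric.mem_closedBall, dist_eq_norm] using hrednorm t⟩
    apply Set.Finite.of_finite_image ((hloc R).subset himg)
    intro t _ t' _ h
    rw [← hredmk t, h, hredmk t']
  -- pick a good coset
  obtain ⟨t0, ht0Sig, ht0bad⟩ := (hinf.diff (hTorFin.union hBadFin)).nonempty
  have ht0S : t0 ∈ π '' S := ht0Sig
  have ht0Tor : t0 ∉ Tor := fun h => ht0bad (Or.inl ⟨ht0S, h⟩)
  have hfr : f (red t0) = 0 := by
    by_contra h
    exact ht0bad (Or.inr ⟨ht0S, h⟩)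
  have htfree : ∀ m n : ℤ, m • t0 = n • t0 → m = n := by
    intro m n h
    by_contra hne
    refine ht0Tor ⟨m - n, sub_ne_zero.2 hne, ?_⟩
    rw [sub_smul, h, sub_self]
  obtain ⟨s, hsS, hst⟩ := ht0S
  set r : V := red t0 with hrdef
  have hrmk : π r = t0 := hredmk t0
  have hμ : s - r ∈ Λ := by
    have : π s = π r := by rw [hst, hrmk]
    rw [hπdef] at this
    exact (QuotientAddGroup.eq_iff_sub_mem).1 this
  have hrs : r + (s - r) = s := by abel
  -- the grid: every coset N • t0 contains a support point
  have cert : ∀ p : ℕ × ℕ, ∃ g ∈ W, ∃ k : ℕ,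
      ((P^p.1 * Q^p.2 : ℤ)) • t0 = ((P:ℤ)^k) • g := by
    intro p
    set N : ℤ := P^p.1 * Q^p.2 with hNdef
    have hNne : N ≠ 0 := mul_ne_zero (pow_ne_zero _ hPne) (pow_ne_zero _ hQne)
    have hkey := goodPQ p.1 p.2 r (s - r) hμ
    rw [hrs] at hkey
    rw [hfr] at hkey
    -- hkey : f (N • s) - f s = f (N • r) - 0
    have hfs : f s ≠ 0 := hsS
    have hmain : ∃ x : V, f x ≠ 0 ∧ π x = N • t0 := by
      by_cases hNr : f ((N:ℝ) • r) = 0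
      · refine ⟨(N:ℝ) • s, ?_, ?_⟩
        · rw [hNr] at hkey
          intro h
          rw [h] at hkey
          exact hfs (by linarith)
        · rw [mkz, hst]
      · exact ⟨(N:ℝ) • r, hNr, by rw [mkz, hrmk]⟩
    obtain ⟨x, hx, hxmk⟩ := hmain
    have hx0 : x ≠ 0 := by
      intro h
      have : π x = 0 := by rw [h]; exact mkzero 0 (zero_mem Λ)
      rw [hxmk] at this
      have : N = 0 := by
        have h2 : N • t0 = (0:ℤ) • t0 := by rw [this, zero_smul]
        exact htfree _ _ h2
      exact hNne this
    obtain ⟨k, z, hz, hz', hxz⟩ := descend x hx hx0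
    refine ⟨π z, keyW z hz hz', k, ?_⟩
    rw [← hxmk, hxz]
    have : ((P:ℝ)^k) = (((P:ℤ)^k : ℤ):ℝ) := by push_cast; ring
    rw [this, mkz]
  choose gfun hgmem kfun hkeq using cert
  -- multiplicative independence: equal integers force equal Q-exponents
  have hkeyQ : ∀ (c a e a' e' : ℕ), (P:ℤ)^c * (P^a * Q^e) = P^a' * Q^e' → e = e' := by
    intro c a e a' e' h
    have h' : (P:ℤ)^(c+a) * Q^e = P^a' * Q^e' := by
      rw [pow_add, mul_assoc]
      exact h
    have hq : (P:ℚ)^(c+a) * (Q:ℚ)^e = (P:ℚ)^a' * (Q:ℚ)^e' := by exact_mod_cast h'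
    have hzp : (P:ℚ)^((c+a : ℕ) : ℤ) / (P:ℚ)^((a' : ℕ) : ℤ)
        = (Q:ℚ)^((e' : ℕ) : ℤ) / (Q:ℚ)^((e : ℕ) : ℤ) := by
      rw [zpow_natCast, zpow_natCast, zpow_natCast, zpow_natCast]
      rw [div_eq_div_iff (pow_ne_zero _ hPQ0) (pow_ne_zero _ hQQ0)]
      rw [hq]
      ring
    rw [← zpow_sub₀ hPQ0, ← zpow_sub₀ hQQ0] at hzp
    obtain ⟨h1, h2⟩ := hPQ _ _ hzp
    omega
  -- same base coset forces same Q-exponent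
  have hsame : ∀ p q : ℕ × ℕ, gfun p = gfun q → p.2 = q.2 := by
    have haux : ∀ p q : ℕ × ℕ, gfun p = gfun q → kfun p ≤ kfun q → p.2 = q.2 := by
      intro p q hg hk
      have e2 : ((P:ℤ)^(kfun q - kfun p)) • (((P:ℤ)^(kfun p)) • (gfun p))
          = ((P:ℤ)^(kfun q)) • (gfun p) := by
        rw [smul_smul, ← pow_add, Nat.sub_add_cancel hk]
      have e3 : (((P:ℤ)^(kfun q - kfun p)) * (P^p.1 * Q^p.2)) • t0
          = (P^q.1 * Q^q.2 : ℤ) • t0 := by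
        rw [mul_smul, hkeq p, e2, hg, ← hkeq q]
      have e5 := htfree _ _ e3
      exact hkeyQ _ _ _ _ _ e5
    intro p q hg
    rcases le_total (kfun p) (kfun q) with h | h
    · exact haux p q hg h
    · exact (haux q p hg.symm h).symm
  -- the counting argument
  set G : Finset (V ⧸ Λ) := hWfin.toFinset with hGdef
  set K : ℕ := G.card with hKdef
  set B : Finset (ℕ × ℕ) := Finset.range (K+1) ×ˢ Finset.range (K+1) with hBdef
  have hmapsto : ∀ p ∈ B, gfun p ∈ G := fun p _ => hWfin.mem_toFinset.2 (hgmem p)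
  have hcards := Finset.card_eq_sum_card_fiberwise hmapsto
  have hfib : ∀ g ∈ G, (B.filter (fun p => gfun p = g)).card ≤ K+1 := by
    intro g hg
    rcases Finset.eq_empty_or_nonempty (B.filter (fun p => gfun p = g)) with he | hne
    · rw [he]
      simp
    · obtain ⟨p₀, hp₀⟩ := hne
      have hp₀' := Finset.mem_filter.1 hp₀
      have hsub : B.filter (fun p => gfun p = g) ⊆ Finset.range (K+1) ×ˢ {p₀.2} := by
        intro p hp
        have hp' := Finset.mem_filter.1 hp
        have hb2 : p.2 = p₀.2 := hsame p p₀ (hp'.2.trans hp₀'.2.symm)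
        rw [Finset.mem_product]
        constructor
        · exact (Finset.mem_product.1 hp'.1).1
        · simp [hb2]
      calc (B.filter (fun p => gfun p = g)).card
          ≤ (Finset.range (K+1) ×ˢ ({p₀.2} : Finset ℕ)).card := Finset.card_le_card hsub
        _ = (K+1) * 1 := by rw [Finset.card_product, Finset.card_range, Finset.card_singleton]
        _ = K+1 := by ring
  have hsum : ∑ g ∈ G, (B.filter (fun p => gfun p = g)).card ≤ G.card * (K+1) := by
    calc ∑ g ∈ G, (B.filter (fun p => gfun p = g)).card
        ≤ ∑ _g ∈ G, (K+1) := Finset.sum_le_sum hfib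
      _ = G.card * (K+1) := by rw [Finset.sum_const, smul_eq_mul]
  have hBcard : B.card = (K+1) * (K+1) := by
    rw [hBdef, Finset.card_product, Finset.card_range]
  rw [hBcard] at hcards
  rw [← hcards] at hsum
  -- (K+1)*(K+1) ≤ K*(K+1) is absurd
  rw [← hKdef] at hsum
  nlinarith [hsum]
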